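/- Forward Euler preserves the safety ordering of vehicles: let v : ℝ → ℝ be nonincreasing with v(ρ) = 0 for ρ ≥ 1, suppose y ↦ v(1/y) is Lipschitz on [1,∞) with constant L, and assume Δt · L ≤ ℓ. Let positions be updated by z_i^{n+1} = z_i^n + Δt · v(ℓ/(z_{i+1}^n − z_i^n)) for i = 1,…,N−1 together with z_N^{n+1} = z_N^n + Δt · v(ℓ/g_N^n), where g_N^n ≥ ℓ denotes the gap ahead of the leading vehicle (g_N^n = M ℓ with M ≥ 1 in the non-periodic case). If z_i^0 + ℓ ≤ z_{i+1}^0 for all i = 1,…,N−1, then z_i^n + ℓ ≤ z_{i+1}^n for all i = 1,…,N−1 and all n ≥ 0. -/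
import Mathlib

lemma euler_key (ℓ Δt L : ℝ) (hℓ : 0 < ℓ) (hΔt : 0 < Δt)
    (v : ℝ → ℝ) (hmono : Antitone v)
    (hlip : ∀ a b : ℝ, 1 ≤ a → 1 ≤ b → |v (1 / a) - v (1 / b)| ≤ L * |a - b|)
    (hCFL : Δt * L ≤ ℓ)
    (a b : ℝ) (ha : ℓ ≤ a) (hb : ℓ ≤ b) :
    ℓ ≤ a + Δt * (v (ℓ / b) - v (ℓ / a)) := by
  have ha1 : (1:ℝ) ≤ a / ℓ := (one_le_div hℓ).2 ha
  have hb1 : (1:ℝ) ≤ b / ℓ := (one_le_div hℓ).2 hb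
  rcases le_total a b with hab | hab
  · have : v (ℓ / a) ≤ v (ℓ / b) := by
      apply hmono
      apply div_le_div_of_nonneg_left hℓ.le (lt_of_lt_of_le hℓ ha) hab
    nlinarith
  · have hrw : v (ℓ / a) - v (ℓ / b) ≤ L * ((a - b) / ℓ) := by
      have h := hlip (a / ℓ) (b / ℓ) ha1 hb1
      rw [one_div_div, one_div_div] at h
      calc v (ℓ / a) - v (ℓ / b) ≤ |v (ℓ / a) - v (ℓ / b)| := le_abs_self _
        _ ≤ L * |a / ℓ - b / ℓ| := h
        _ = L * ((a - b) / ℓ) := by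
            rw [div_sub_div_same, abs_of_nonneg (div_nonneg (by linarith) hℓ.le)]
    have hx : (0:ℝ) ≤ (a - b) / ℓ := div_nonneg (by linarith) hℓ.le
    have h2 : Δt * (v (ℓ / a) - v (ℓ / b)) ≤ ℓ * ((a - b) / ℓ) := by
      calc Δt * (v (ℓ / a) - v (ℓ / b)) ≤ Δt * (L * ((a - b) / ℓ)) := by
            exact mul_le_mul_of_nonneg_left hrw hΔt.le
        _ = (Δt * L) * ((a - b) / ℓ) := by ring
        _ ≤ ℓ * ((a - b) / ℓ) := mul_le_mul_of_nonneg_right hCFL hx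
    have : ℓ * ((a - b) / ℓ) = a - b := by field_simp
    nlinarith

theorem eulerFtL_no_collision
    (N : ℕ) (hN : 2 ≤ N) (ℓ Δt L : ℝ) (hℓ : 0 < ℓ) (hΔt : 0 < Δt)
    (v : ℝ → ℝ) (hmono : Antitone v) (hzero : ∀ ρ : ℝ, 1 ≤ ρ → v ρ = 0)
    (hlip : ∀ a b : ℝ, 1 ≤ a → 1 ≤ b → |v (1 / a) - v (1 / b)| ≤ L * |a - b|)
    (hCFL : Δt * L ≤ ℓ)
    (z : ℕ → ℕ → ℝ) (g : ℕ → ℝ) (hg : ∀ n : ℕ, ℓ ≤ g n)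
    (hupd : ∀ n : ℕ, ∀ i ∈ Finset.Icc 1 (N - 1),
      z (n + 1) i = z n i + Δt * v (ℓ / (z n (i + 1) - z n i)))
    (hupdN : ∀ n : ℕ, z (n + 1) N = z n N + Δt * v (ℓ / g n))
    (h0 : ∀ i ∈ Finset.Icc 1 (N - 1), z 0 i + ℓ ≤ z 0 (i + 1)) :
    ∀ n : ℕ, ∀ i ∈ Finset.Icc 1 (N - 1), z n i + ℓ ≤ z n (i + 1) := by
  intro n
  induction n with
  | zero => exact h0
  | succ n ih =>
    intro i hi
    obtain ⟨hi1, hi2⟩ := Finset.mem_Icc.1 hi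
    have hgap : ℓ ≤ z n (i + 1) - z n i := by
      have := ih i hi; linarith
    have hz : z (n + 1) i = z n i + Δt * v (ℓ / (z n (i + 1) - z n i)) :=
      hupd n i hi
    rcases lt_or_eq_of_le hi2 with hlt | heq
    · -- i + 1 ≤ N - 1
      have hmem : i + 1 ∈ Finset.Icc 1 (N - 1) :=
        Finset.mem_Icc.2 ⟨le_add_self.trans (le_refl _) |>.trans (Nat.le_add_left 1 i), hlt⟩
      have hgap2 : ℓ ≤ z n (i + 2) - z n (i + 1) := by
        have := ih (i + 1) hmem; linarith
      have hz2 : z (n + 1) (i + 1) =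
          z n (i + 1) + Δt * v (ℓ / (z n (i + 2) - z n (i + 1))) := hupd n (i + 1) hmem
      have key := euler_key ℓ Δt L hℓ hΔt v hmono hlip hCFL
        (z n (i + 1) - z n i) (z n (i + 2) - z n (i + 1)) hgap hgap2
      rw [hz, hz2]
      have : v (ℓ / (z n (i+1+1) - z n (i+1))) = v (ℓ / (z n (i+2) - z n (i+1))) := by
        norm_num
      linarith [key]
    · -- i = N - 1, so i + 1 = N
      have hiN : i + 1 = N := by omega
      have hz2 : z (n + 1) (i + 1) = z n (i + 1) + Δt * v (ℓ / g n) := by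
        rw [hiN]; exact hupdN n
      have key := euler_key ℓ Δt L hℓ hΔt v hmono hlip hCFL
        (z n (i + 1) - z n i) (g n) hgap (hg n)
      rw [hz, hz2]
      linarith [key]
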